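/- Let p be a prime and d an integer with p-adic expansion d = d_0 + d_1 p + … + d_{n-1} p^{n-1}, where 0 ≤ d_i < p, d_0 ≠ 0 and d_{n-1} ≠ 0, and suppose d_m = d_{m+1} = … = d_{m+k-1} = p−1 for some m, k with 1 ≤ m ≤ m+k ≤ n−1. Then the binomial coefficient C(d−1, p^m · ℓ) is not divisible by p for every integer ℓ with 0 ≤ ℓ ≤ (d_{m+k}+1)·p^k − 1. -/

import Mathlib

/-- Sum of maximal digits over `Ico a b` is `p ^ b - p ^ a`. -/
lemma aux_geom (p : ℕ) (hp : 1 ≤ p) : ∀ a b : ℕ, a ≤ b →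
    ∑ i ∈ Finset.Ico a b, (p - 1) * p ^ i = p ^ b - p ^ a := by
  intro a b hab
  induction b with
  | zero => simp_all
  | succ b ih =>
    rcases Nat.lt_or_ge a (b + 1) with h | h
    · have hab' : a ≤ b := Nat.lt_succ_iff.mp h
      rw [Finset.sum_Ico_succ_top hab', ih hab']
      have h1 : p ^ a ≤ p ^ b := Nat.pow_le_pow_right hp hab'
      have h2 : (p - 1) * p ^ b + p ^ b = p * p ^ b := by
        rw [Nat.sub_one_mul]
        have : p ^ b ≤ p * p ^ b := Nat.le_mul_of_pos_left _ (by omega)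
        omega
      have : p * p ^ b = p ^ (b + 1) := (pow_succ' p b).symm
      omega
    · have : a = b + 1 := le_antisymm hab h
      simp [this]

/-- No-carry criterion: if every partial remainder of `K` is at most that of `N`,
then `p` does not divide `choose N K`. -/
lemma aux_nocarry (p : ℕ) (hp : p.Prime) (N K : ℕ) (hKN : K ≤ N)
    (h : ∀ t : ℕ, K % p ^ t ≤ N % p ^ t) : ¬ p ∣ Nat.choose N K := by
  rw [← emultiplicity_eq_zero]
  rw [hp.emultiplicity_choose hKN (Nat.lt_succ_self _)]
  have hempty : ∀ i ∈ Finset.Ico 1 (Nat.log p N + 1),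
      ¬ p ^ i ≤ K % p ^ i + (N - K) % p ^ i := by
    intro i _
    have hpi : 0 < p ^ i := Nat.pow_pos hp.pos
    have h1 : N % p ^ i < p ^ i := Nat.mod_lt _ hpi
    have h2 : K % p ^ i < p ^ i := Nat.mod_lt _ hpi
    have hdN := Nat.div_add_mod N (p ^ i)
    have hdK := Nat.div_add_mod K (p ^ i)
    have hqle : K / p ^ i ≤ N / p ^ i := by
      by_contra hcon
      push_neg at hcon
      have : N / p ^ i + 1 ≤ K / p ^ i := hcon
      have : p ^ i * (N / p ^ i + 1) ≤ p ^ i * (K / p ^ i) :=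
        Nat.mul_le_mul_left _ this
      have hK : p ^ i * (K / p ^ i) ≤ K := Nat.mul_div_le K (p ^ i)
      have := h i
      nlinarith [Nat.mul_div_le N (p ^ i)]
    obtain ⟨a, ha⟩ := Nat.le.dest hqle
    obtain ⟨r, hr⟩ := Nat.le.dest (h i)
    have hsub : N - K = p ^ i * a + r := by
      have : p ^ i * (N / p ^ i) = p ^ i * (K / p ^ i) + p ^ i * a := by
        rw [← ha, Nat.mul_add]
      omega
    have hc0 : 0 ≤ K % p ^ i := Nat.zero_le _
    have hc1 : 0 ≤ N % p ^ i := Nat.zero_le _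
    have hrlt : r < p ^ i := by omega
    have hmr : (N - K) % p ^ i = r := by
      rw [hsub, Nat.mul_add_mod]
      exact Nat.mod_eq_of_lt hrlt
    omega
  rw [Finset.filter_false_of_mem hempty, Finset.card_empty, Nat.cast_zero]

theorem stmt17 (p : ℕ) (hp : p.Prime) (d n : ℕ) (dig : ℕ → ℕ)
    (hdrep : d = ∑ i ∈ Finset.range n, dig i * p ^ i)
    (hdig : ∀ i < n, dig i < p) (hd0 : dig 0 ≠ 0) (hdtop : dig (n - 1) ≠ 0)
    (m k : ℕ) (hm : 1 ≤ m) (hmk : m + k ≤ n - 1)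
    (hconsec : ∀ i, m ≤ i → i < m + k → dig i = p - 1)
    (ℓ : ℕ) (hℓ : ℓ ≤ (dig (m + k) + 1) * p ^ k - 1) :
    ¬ p ∣ Nat.choose (d - 1) (p ^ m * ℓ) := by
  have hp1 : 1 < p := hp.one_lt
  set D : ℕ → ℕ := fun t => ∑ i ∈ Finset.range t, dig i * p ^ i with hD
  have hn : 1 ≤ n := by omega
  have hmkn : m + k + 1 ≤ n := by omega
  -- digits at positions m + k and below are < p
  have hdigmk : dig (m + k) < p := hdig _ (by omega)
  -- D t < p ^ t for t ≤ n
  have hDlt : ∀ t ≤ n, D t < p ^ t := by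
    intro t ht
    induction t with
    | zero => simp [hD]
    | succ t ih =>
      have h1 : D t < p ^ t := ih (by omega)
      have h2 : dig t < p := hdig t (by omega)
      have : D (t + 1) = D t + dig t * p ^ t := Finset.sum_range_succ _ _
      have h3 : dig t * p ^ t ≤ (p - 1) * p ^ t := Nat.mul_le_mul_right _ (by omega)
      have h4 : (p - 1) * p ^ t + p ^ t = p ^ (t + 1) := by
        rw [Nat.sub_one_mul, pow_succ']
        have : p ^ t ≤ p * p ^ t := Nat.le_mul_of_pos_left _ hp.pos
        omega
      omega
  -- D is monotone
  have hDmono : ∀ s t : ℕ, s ≤ t → D s ≤ D t := by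
    intro s t hst
    apply Finset.sum_le_sum_of_subset
    exact Finset.range_subset_range.mpr hst
  -- D t ≥ 1 for t ≥ 1
  have hD1 : ∀ t, 1 ≤ t → 1 ≤ D t := by
    intro t ht
    have h1 : dig 0 * p ^ 0 ≤ D t := Finset.single_le_sum (f := fun i => dig i * p ^ i)
        (fun i _ => Nat.zero_le _) (Finset.mem_range.mpr (by omega))
    simp only [pow_zero, Nat.mul_one] at h1
    omega
  -- d mod p^t = D t for t ≤ n
  have hdmod : ∀ t ≤ n, d % p ^ t = D t := by
    intro t ht
    have hsplit : d = D t + ∑ i ∈ Finset.Ico t n, dig i * p ^ i := by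
      rw [hdrep, hD]
      rw [Finset.range_eq_Ico, ← Finset.sum_Ico_consecutive _ (Nat.zero_le t) ht]
      simp only [Finset.range_eq_Ico]
    have hdvd : p ^ t ∣ ∑ i ∈ Finset.Ico t n, dig i * p ^ i := by
      apply Finset.dvd_sum
      intro i hi
      exact Dvd.dvd.mul_left (pow_dvd_pow p (Finset.mem_Ico.mp hi).1) _
    obtain ⟨c, hc⟩ := hdvd
    rw [hsplit, hc, Nat.add_mul_mod_self_left]
    exact Nat.mod_eq_of_lt (hDlt t ht)
  -- (d-1) mod p^t = D t - 1 for 1 ≤ t ≤ n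
  have hNmod : ∀ t, 1 ≤ t → t ≤ n → (d - 1) % p ^ t = D t - 1 := by
    intro t h1t htn
    have hmod := hdmod t htn
    have hDt1 := hD1 t h1t
    have hDtlt := hDlt t htn
    have hdm := Nat.div_add_mod d (p ^ t)
    have : d - 1 = p ^ t * (d / p ^ t) + (D t - 1) := by omega
    rw [this, Nat.mul_add_mod]
    exact Nat.mod_eq_of_lt (by omega)
  -- lower bound on D (m + j) for j ≤ k
  have hDlow : ∀ j ≤ k, 1 + (p ^ (m + j) - p ^ m) ≤ D (m + j) := by
    intro j hjk
    have hgeom := aux_geom p (by omega) m (m + j) (by omega)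
    have hsub : ({0} : Finset ℕ) ∪ Finset.Ico m (m + j) ⊆ Finset.range (m + j) := by
      intro x hx
      simp only [Finset.mem_union, Finset.mem_singleton, Finset.mem_Ico] at hx
      rw [Finset.mem_range]
      omega
    have hdisj : Disjoint ({0} : Finset ℕ) (Finset.Ico m (m + j)) := by
      simp only [Finset.disjoint_singleton_left, Finset.mem_Ico]
      omega
    have hle : ∑ i ∈ ({0} : Finset ℕ) ∪ Finset.Ico m (m + j), dig i * p ^ i ≤ D (m + j) :=
      Finset.sum_le_sum_of_subset hsub
    rw [Finset.sum_union hdisj] at hle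
    have hIco : ∑ i ∈ Finset.Ico m (m + j), dig i * p ^ i
        = ∑ i ∈ Finset.Ico m (m + j), (p - 1) * p ^ i := by
      apply Finset.sum_congr rfl
      intro i hi
      rw [Finset.mem_Ico] at hi
      rw [hconsec i hi.1 (by omega)]
    rw [hIco, hgeom] at hle
    simp only [Finset.sum_singleton, pow_zero, Nat.mul_one] at hle
    omega
  -- bound on K
  set K := p ^ m * ℓ with hK
  have hppos : 0 < p ^ k := Nat.pow_pos hp.pos
  have hℓ' : ℓ + 1 ≤ (dig (m + k) + 1) * p ^ k := by
    have : 1 ≤ (dig (m + k) + 1) * p ^ k := Nat.one_le_iff_ne_zero.mpr (by positivity)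
    omega
  have hKbound : K + 1 ≤ D (m + k + 1) := by
    have h1 : D (m + k + 1) = D (m + k) + dig (m + k) * p ^ (m + k) :=
      Finset.sum_range_succ _ _
    have h2 := hDlow k le_rfl
    have h3 : K ≤ (dig (m + k) + 1) * p ^ (m + k) - p ^ m := by
      have : K + p ^ m ≤ (dig (m + k) + 1) * p ^ k * p ^ m := by
        calc K + p ^ m = p ^ m * (ℓ + 1) := by ring
        _ ≤ p ^ m * ((dig (m + k) + 1) * p ^ k) := Nat.mul_le_mul_left _ hℓ'
        _ = (dig (m + k) + 1) * p ^ k * p ^ m := by ring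
      have heq : (dig (m + k) + 1) * p ^ k * p ^ m = (dig (m + k) + 1) * p ^ (m + k) := by
        rw [mul_assoc, ← pow_add]; ring_nf
      omega
    have h4 : p ^ m ≤ p ^ (m + k) := Nat.pow_le_pow_right (by omega) (by omega)
    have h5 : (dig (m + k) + 1) * p ^ (m + k) = dig (m + k) * p ^ (m + k) + p ^ (m + k) := by
      ring
    omega
  have hKN : K ≤ d - 1 := by
    have h1 : D (m + k + 1) ≤ D n := hDmono _ _ hmkn
    have h2 : D n = d := hdrep.symm
    omega
  -- the key digit inequality
  have hkey : ∀ t : ℕ, K % p ^ t ≤ (d - 1) % p ^ t := by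
    intro t
    rcases le_or_gt t m with htm | hmt
    · -- p^t divides K
      have : p ^ t ∣ K := Dvd.dvd.mul_right (pow_dvd_pow p htm) _
      simp [Nat.eq_zero_of_dvd_of_lt, Nat.mod_eq_zero_of_dvd this]
    · rcases le_or_gt t (m + k) with htmk | hmkt
      · -- m < t ≤ m + k : write t = m + j, 1 ≤ j ≤ k
        obtain ⟨j, rfl⟩ := Nat.le.dest (le_of_lt hmt)
        have hj1 : 1 ≤ j := by omega
        have hjk : j ≤ k := by omega
        have hKmod : K % p ^ (m + j) = p ^ m * (ℓ % p ^ j) := by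
          rw [hK, pow_add]
          exact Nat.mul_mod_mul_left _ _ _
        have hNmodt := hNmod (m + j) (by omega) (by omega)
        have hDlowj := hDlow j hjk
        have hℓmod : ℓ % p ^ j < p ^ j := Nat.mod_lt _ (Nat.pow_pos hp.pos)
        have hKle : p ^ m * (ℓ % p ^ j) ≤ p ^ (m + j) - p ^ m := by
          have : p ^ m * (ℓ % p ^ j) + p ^ m ≤ p ^ m * p ^ j := by
            calc p ^ m * (ℓ % p ^ j) + p ^ m = p ^ m * (ℓ % p ^ j + 1) := by ring
            _ ≤ p ^ m * p ^ j := Nat.mul_le_mul_left _ hℓmod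
          rw [← pow_add] at this
          omega
        omega
      · -- t > m + k : K % p^t = K
        have hKlt : K < p ^ (m + k + 1) := by
          have h1 : D (m + k + 1) < p ^ (m + k + 1) := hDlt _ hmkn
          omega
        have hKlt' : K < p ^ t := lt_of_lt_of_le hKlt (Nat.pow_le_pow_right (by omega) hmkt)
        rw [Nat.mod_eq_of_lt hKlt']
        rcases le_or_gt t n with htn | hnt
        · rw [hNmod t (by omega) htn]
          have : D (m + k + 1) ≤ D t := hDmono _ _ (by omega)
          omega
        · have hdlt : d - 1 < p ^ t := by
            have h1 : D n < p ^ n := hDlt n le_rfl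
            have h2 : p ^ n ≤ p ^ t := Nat.pow_le_pow_right (by omega) (by omega)
            have h3 : D n = d := hdrep.symm
            omega
          rw [Nat.mod_eq_of_lt hdlt]
          exact hKN
  exact aux_nocarry p hp (d - 1) K hKN hkey
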